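/- In the allowable multiplicity-type setting with K ≥ 2, let θ = N/(K−1). If an integer a ≥ 0 satisfies (a+1)·(S − (a/2)(K−1)) > C and S ≤ (a+1)(K−1) for some error pattern x ∈ {0,1,…,ℓ}^N and erasure pattern x̂ ∈ {1,…,T}^N with score S and cost C, then μ ≤ a ≤ ⌈μθ − 1/2 + √(μ²θ(θ−1) + 1/4)⌉ − 1. -/

import Mathlib

open Finset

/-- The minimum of `f` over the finite set `s` of indices, with the convention that the
minimum over the empty set is `0`. -/
def minOv (s : Finset ℕ) (f : ℕ → ℕ) : ℕ :=
  if h : s.Nonempty then s.inf' h f else 0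

/-- The multiplicity type `(m 1, …, m ℓ)` is *allowable* for maximum multiplicity `μ`:
`∑_{j=1}^ℓ m j ≤ μ` and
`∑_{j=1}^ℓ m j (μ - m j) ≤ (μ+1) (#{j : m j ≠ 0} - 1) min_{j : m j ≠ 0} m j`. -/
def Allowable (ℓ μ : ℕ) (m : ℕ → ℕ) : Prop :=
  (∑ j ∈ Finset.Icc 1 ℓ, m j) ≤ μ ∧
    (∑ j ∈ Finset.Icc 1 ℓ, (m j : ℤ) * ((μ : ℤ) - (m j : ℤ)))
      ≤ ((μ : ℤ) + 1) * ((((Finset.Icc 1 ℓ).filter fun j => m j ≠ 0).card : ℤ) - 1)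
          * (minOv ((Finset.Icc 1 ℓ).filter fun j => m j ≠ 0) m : ℤ)

/-- The score `S = ∑_{i : x i ≥ 1} m (x i) (x̂ i)` of an error pattern `x` and an erasure
pattern `x̂` (positions indexed by `i ∈ {1,…,N}`). -/
def score (N : ℕ) (m : ℕ → ℕ → ℕ) (x xhat : ℕ → ℕ) : ℚ :=
  ∑ i ∈ Finset.Icc 1 N, if 1 ≤ x i then (m (x i) (xhat i) : ℚ) else 0

/-- The cost `C = (1/2) ∑_{i=1}^N ∑_{j=1}^ℓ m j (x̂ i) (m j (x̂ i) + 1)`. -/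
def cost (N ℓ : ℕ) (m : ℕ → ℕ → ℕ) (xhat : ℕ → ℕ) : ℚ :=
  (1 / 2) * ∑ i ∈ Finset.Icc 1 N, ∑ j ∈ Finset.Icc 1 ℓ,
    (m j (xhat i) : ℚ) * ((m j (xhat i) : ℚ) + 1)

/-- `ρ_{k,a} = μ(2a+1-μ)/(a(a+1)) + ∑_{j=1}^ℓ m_{j,k}(m_{j,k}+1)/(a(a+1))`. -/
def rho (μ ℓ : ℕ) (m : ℕ → ℕ → ℕ) (a k : ℕ) : ℚ :=
  (μ : ℚ) * (2 * (a : ℚ) + 1 - (μ : ℚ)) / ((a : ℚ) * ((a : ℚ) + 1)) +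
    ∑ j ∈ Finset.Icc 1 ℓ, (m j k : ℚ) * ((m j k : ℚ) + 1) / ((a : ℚ) * ((a : ℚ) + 1))

/-- The distortion measure `δ_a(0,k) = ρ_{k,a}` and `δ_a(j,k) = ρ_{k,a} - 2 m_{j,k}/a`
for `1 ≤ j ≤ ℓ`. -/
def deltaA (μ ℓ : ℕ) (m : ℕ → ℕ → ℕ) (a j k : ℕ) : ℚ :=
  if j = 0 then rho μ ℓ m a k else rho μ ℓ m a k - 2 * (m j k : ℚ) / (a : ℚ)

/-- The distortion `d_a(x, x̂) = ∑_{i=1}^N δ_a(x i, x̂ i)`. -/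
def distA (N μ ℓ : ℕ) (m : ℕ → ℕ → ℕ) (a : ℕ) (x xhat : ℕ → ℕ) : ℚ :=
  ∑ i ∈ Finset.Icc 1 N, deltaA μ ℓ m a (x i) (xhat i)

lemma pointA (ℓ μ : ℕ) (m : ℕ → ℕ) (h : Allowable ℓ μ m) (j : ℕ)
    (hj : j ∈ Finset.Icc 1 ℓ) :
    ((μ : ℤ) + 1) * (m j : ℤ) ≤ ∑ j' ∈ Finset.Icc 1 ℓ, (m j' : ℤ) * ((m j' : ℤ) + 1) := by
  obtain ⟨h1, h2⟩ := h
  by_cases hz : m j = 0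
  · rw [hz]
    simp only [Nat.cast_zero, mul_zero]
    apply Finset.sum_nonneg
    intro i _
    positivity
  · set F := (Finset.Icc 1 ℓ).filter (fun j => m j ≠ 0) with hF
    have hjF : j ∈ F := Finset.mem_filter.mpr ⟨hj, hz⟩
    have hne : F.Nonempty := ⟨j, hjF⟩
    set mn : ℕ := F.inf' hne m with hmn
    have hmin : minOv F m = mn := by rw [minOv, dif_pos hne]
    rw [hmin] at h2
    have hcard : 1 ≤ F.card := Finset.card_pos.mpr hne
    have hsub : (F.erase j).card * mn ≤ ∑ j' ∈ F.erase j, m j' := by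
      have := Finset.card_nsmul_le_sum (F.erase j) m mn
        (fun i hi => hmn ▸ Finset.inf'_le m (Finset.mem_of_mem_erase hi))
      simpa [nsmul_eq_mul] using this
    have hFsum : ∑ j' ∈ F, m j' ≤ ∑ j' ∈ Finset.Icc 1 ℓ, m j' :=
      Finset.sum_le_sum_of_subset (Finset.filter_subset _ _)
    have herase : ∑ j' ∈ F, m j' = m j + ∑ j' ∈ F.erase j, m j' :=
      (Finset.add_sum_erase F m hjF).symm
    have hcarderase : (F.erase j).card = F.card - 1 := Finset.card_erase_of_mem hjF
    have hsumN : m j + (F.card - 1) * mn ≤ ∑ j' ∈ Finset.Icc 1 ℓ, m j' := by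
      rw [← hcarderase]
      omega
    have hsumZ : (m j : ℤ) + ((F.card : ℤ) - 1) * (mn : ℤ)
        ≤ ∑ j' ∈ Finset.Icc 1 ℓ, (m j' : ℤ) := by
      zify [hcard] at hsumN
      convert hsumN using 2
    have hkey : ∑ j' ∈ Finset.Icc 1 ℓ, (m j' : ℤ) * ((m j' : ℤ) + 1)
        = ((μ : ℤ) + 1) * (∑ j' ∈ Finset.Icc 1 ℓ, (m j' : ℤ))
          - ∑ j' ∈ Finset.Icc 1 ℓ, (m j' : ℤ) * ((μ : ℤ) - (m j' : ℤ)) := by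
      rw [Finset.mul_sum, ← Finset.sum_sub_distrib]
      exact Finset.sum_congr rfl fun i _ => by ring
    have hmul := mul_le_mul_of_nonneg_left hsumZ (by positivity : (0:ℤ) ≤ (μ : ℤ) + 1)
    rw [hkey]
    nlinarith [h2, hmul]

lemma pointB (ℓ μ a : ℕ) (m : ℕ → ℕ) (h : Allowable ℓ μ m) (ha : μ ≤ a) (j : ℕ)
    (hj : j ∈ Finset.Icc 1 ℓ) :
    2 * ((a : ℤ) + 1) * (m j : ℤ)
      ≤ (μ : ℤ) * (2 * (a : ℤ) + 1 - (μ : ℤ))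
        + ∑ j' ∈ Finset.Icc 1 ℓ, (m j' : ℤ) * ((m j' : ℤ) + 1) := by
  have hA := pointA ℓ μ m h j hj
  have hmj : m j ≤ μ :=
    le_trans (Finset.single_le_sum (f := fun j' => m j') (fun i _ => Nat.zero_le _) hj) h.1
  have haZ : (μ : ℤ) ≤ (a : ℤ) := by exact_mod_cast ha
  have hmjZ : (m j : ℤ) ≤ (μ : ℤ) := by exact_mod_cast hmj
  nlinarith [hA, mul_nonneg (by linarith : (0:ℤ) ≤ 2 * (a:ℤ) + 1 - (μ:ℤ))
    (by linarith : (0:ℤ) ≤ (μ:ℤ) - (m j : ℤ))]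

set_option maxHeartbeats 1000000 in
/-- In the allowable multiplicity-type setting with `K ≥ 2`, let
`θ = N/(K-1)`. If an integer `a ≥ 0` satisfies `(a+1)(S - (a/2)(K-1)) > C` and
`S ≤ (a+1)(K-1)` for some error pattern `x ∈ {0,…,ℓ}^N` and erasure pattern
`x̂ ∈ {1,…,T}^N` with score `S` and cost `C`, then
`μ ≤ a ≤ ⌈μθ - 1/2 + √(μ²θ(θ-1) + 1/4)⌉ - 1`. -/
theorem stmt_10 (μ ℓ T N K : ℕ) (hμ : 1 ≤ μ) (hℓ : 1 ≤ ℓ) (hT : 1 ≤ T) (hN : 1 ≤ N)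
    (hK : 2 ≤ K) (m : ℕ → ℕ → ℕ)
    (hallow : ∀ k ∈ Finset.Icc 1 T, Allowable ℓ μ (fun j => m j k))
    (htype1 : ∀ j ∈ Finset.Icc 1 ℓ, m j 1 = if j = 1 then μ else 0)
    (x : ℕ → ℕ) (hx : ∀ i ∈ Finset.Icc 1 N, x i ≤ ℓ)
    (xhat : ℕ → ℕ) (hxhat : ∀ i ∈ Finset.Icc 1 N, xhat i ∈ Finset.Icc 1 T)
    (a : ℕ)
    (hcond : cost N ℓ m xhat
      < ((a : ℚ) + 1) * (score N m x xhat - ((a : ℚ) / 2) * ((K : ℚ) - 1)))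
    (hS : score N m x xhat ≤ ((a : ℚ) + 1) * ((K : ℚ) - 1)) :
    μ ≤ a ∧
      (a : ℤ) ≤
        ⌈(μ : ℝ) * ((N : ℝ) / ((K : ℝ) - 1)) - 1 / 2 +
            Real.sqrt ((μ : ℝ) ^ 2 * ((N : ℝ) / ((K : ℝ) - 1)) *
              (((N : ℝ) / ((K : ℝ) - 1)) - 1) + 1 / 4)⌉ - 1 := by
  -- basic positivity facts
  have hK1Q : (1 : ℚ) ≤ (K : ℚ) - 1 := by
    have : (2 : ℚ) ≤ (K : ℚ) := by exact_mod_cast hK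
    linarith
  have haQ : (0 : ℚ) ≤ (a : ℚ) := by positivity
  have hC0 : 0 ≤ cost N ℓ m xhat := by
    unfold cost
    apply mul_nonneg (by norm_num)
    exact Finset.sum_nonneg fun i _ => Finset.sum_nonneg fun j _ => by positivity
  have hS0 : 0 < score N m x xhat := by
    nlinarith [hcond, hC0, mul_nonneg haQ (by linarith : (0:ℚ) ≤ (K : ℚ) - 1)]
  -- pointwise bound A, summed
  have hptA : ∀ i ∈ Finset.Icc 1 N,
      ((μ : ℚ) + 1) * (if 1 ≤ x i then (m (x i) (xhat i) : ℚ) else 0)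
        ≤ ∑ j ∈ Finset.Icc 1 ℓ, (m j (xhat i) : ℚ) * ((m j (xhat i) : ℚ) + 1) := by
    intro i hi
    have hall := hallow (xhat i) (hxhat i hi)
    by_cases hxi : 1 ≤ x i
    · rw [if_pos hxi]
      have := pointA ℓ μ (fun j => m j (xhat i)) hall (x i)
        (Finset.mem_Icc.mpr ⟨hxi, hx i hi⟩)
      beta_reduce at this
      exact_mod_cast this
    · rw [if_neg hxi, mul_zero]
      apply Finset.sum_nonneg
      intro j _
      positivity
  have step1 : ((μ : ℚ) + 1) * score N m x xhat ≤ 2 * cost N ℓ m xhat := by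
    unfold score cost
    rw [Finset.mul_sum]
    refine le_trans (Finset.sum_le_sum hptA) (le_of_eq ?_)
    ring
  have h1 : 2 * cost N ℓ m xhat
      < 2 * ((a : ℚ) + 1) * score N m x xhat - (a : ℚ) * ((a : ℚ) + 1) * ((K : ℚ) - 1) := by
    nlinarith [hcond]
  have h2 : (a : ℚ) * score N m x xhat ≤ (a : ℚ) * ((a : ℚ) + 1) * ((K : ℚ) - 1) := by
    nlinarith [mul_le_mul_of_nonneg_left hS haQ]
  have hμaQ : (μ : ℚ) < (a : ℚ) + 1 := by nlinarith [step1, h1, h2, hS0]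
  have hμa : μ ≤ a := by
    have : μ < a + 1 := by exact_mod_cast hμaQ
    omega
  -- pointwise bound B, summed
  have hptB : ∀ i ∈ Finset.Icc 1 N,
      2 * ((a : ℚ) + 1) * (if 1 ≤ x i then (m (x i) (xhat i) : ℚ) else 0)
        ≤ (μ : ℚ) * (2 * (a : ℚ) + 1 - (μ : ℚ))
          + ∑ j ∈ Finset.Icc 1 ℓ, (m j (xhat i) : ℚ) * ((m j (xhat i) : ℚ) + 1) := by
    intro i hi
    have hall := hallow (xhat i) (hxhat i hi)
    by_cases hxi : 1 ≤ x i
    · rw [if_pos hxi]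
      have := pointB ℓ μ a (fun j => m j (xhat i)) hall hμa (x i)
        (Finset.mem_Icc.mpr ⟨hxi, hx i hi⟩)
      beta_reduce at this
      exact_mod_cast this
    · rw [if_neg hxi, mul_zero]
      have hsum : (0:ℚ) ≤ ∑ j ∈ Finset.Icc 1 ℓ, (m j (xhat i) : ℚ) * ((m j (xhat i) : ℚ) + 1) := by
        apply Finset.sum_nonneg
        intro j _
        positivity
      have haμQ : (μ : ℚ) ≤ (a : ℚ) := by exact_mod_cast hμa
      have hμ0 : (0:ℚ) ≤ (μ : ℚ) := by positivity
      nlinarith [hsum]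
  have step2 : 2 * ((a : ℚ) + 1) * score N m x xhat
      ≤ (N : ℚ) * ((μ : ℚ) * (2 * (a : ℚ) + 1 - (μ : ℚ))) + 2 * cost N ℓ m xhat := by
    unfold score cost
    rw [Finset.mul_sum]
    refine le_trans (Finset.sum_le_sum hptB) (le_of_eq ?_)
    rw [Finset.sum_add_distrib, Finset.sum_const, nsmul_eq_mul]
    have hNcard : ((Finset.Icc 1 N).card : ℚ) = (N : ℚ) := by
      rw [Nat.card_Icc]
      push_cast
      ring
    rw [hNcard]
    ring
  have key : (a : ℚ) * ((a : ℚ) + 1) * ((K : ℚ) - 1)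
      < (N : ℚ) * (μ : ℚ) * (2 * (a : ℚ) + 1 - (μ : ℚ)) := by
    nlinarith [step2, h1]
  have keyZ : (a : ℤ) * ((a : ℤ) + 1) * ((K : ℤ) - 1)
      < (N : ℤ) * (μ : ℤ) * (2 * (a : ℤ) + 1 - (μ : ℤ)) := by exact_mod_cast key
  have keyR : (a : ℝ) * ((a : ℝ) + 1) * ((K : ℝ) - 1)
      < (N : ℝ) * (μ : ℝ) * (2 * (a : ℝ) + 1 - (μ : ℝ)) := by exact_mod_cast keyZ
  refine ⟨hμa, ?_⟩
  set θ : ℝ := (N : ℝ) / ((K : ℝ) - 1) with hθ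
  have hKR : (0 : ℝ) < (K : ℝ) - 1 := by
    have : (2 : ℝ) ≤ (K : ℝ) := by exact_mod_cast hK
    linarith
  have hθK : θ * ((K : ℝ) - 1) = (N : ℝ) := div_mul_cancel₀ _ (ne_of_gt hKR)
  have hbig : (a : ℝ) * ((a : ℝ) + 1) < (μ : ℝ) * θ * (2 * (a : ℝ) + 1 - (μ : ℝ)) := by
    rw [← mul_lt_mul_iff_of_pos_right hKR]
    have heq : (μ : ℝ) * θ * (2 * (a : ℝ) + 1 - (μ : ℝ)) * ((K : ℝ) - 1)
        = (N : ℝ) * (μ : ℝ) * (2 * (a : ℝ) + 1 - (μ : ℝ)) := by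
      rw [← hθK]
      ring
    rw [heq]
    exact keyR
  have hq2 : ((a : ℝ) + 1 / 2 - (μ : ℝ) * θ) ^ 2
      < (μ : ℝ) ^ 2 * θ * (θ - 1) + 1 / 4 := by nlinarith [hbig]
  have haE : (a : ℝ) < (μ : ℝ) * θ - 1 / 2 + Real.sqrt ((μ : ℝ) ^ 2 * θ * (θ - 1) + 1 / 4) := by
    rcases le_or_gt 0 ((a : ℝ) + 1 / 2 - (μ : ℝ) * θ) with hq | hq
    · have := (Real.lt_sqrt hq).mpr hq2
      linarith
    · linarith [Real.sqrt_nonneg ((μ : ℝ) ^ 2 * θ * (θ - 1) + 1 / 4)]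
  have hceil : (a : ℤ) < ⌈(μ : ℝ) * θ - 1 / 2 + Real.sqrt ((μ : ℝ) ^ 2 * θ * (θ - 1) + 1 / 4)⌉ := by
    rw [Int.lt_ceil]
    push_cast
    exact haE
  omega
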